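/- Let A be a finite dimensional algebra over a field K and f : A → B a surjective homological ring epimorphism. Then ker(f) is an idempotent ideal, hence ker(f) = AeA for some idempotent e ∈ A; in particular B ≅ A/AeA. -/

import Mathlib

universe u

open CategoryTheory CategoryTheory.Limits CategoryTheory.MonoidalCategory TensorProduct

noncomputable section Aux

variable {A B : Type u} [CommRing A] [CommRing B] [Algebra A B]

def auxPi : ModuleCat.of A A ⟶ ModuleCat.of A B :=
  ModuleCat.ofHom (Algebra.linearMap A B)

instance : CategoryTheory.Projective (ModuleCat.of A A) :=
  ModuleCat.projective_of_free (M := ModuleCat.of A A) (Module.Basis.singleton PUnit.{u+1} A)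

variable (A B)

def auxComplex : ChainComplex (ModuleCat.{u} A) ℕ :=
  ChainComplex.mk' (ModuleCat.of A A) (Projective.syzygies (auxPi (A := A) (B := B)))
    (Projective.d (auxPi (A := A) (B := B))) (fun f => ⟨_, Projective.d f, by exact (Category.assoc _ _ _).trans ((whisker_eq _ (kernel.condition _)).trans comp_zero)⟩)

lemma auxComplex_d_1_0 :
    (auxComplex A B).d 1 0 = Projective.d (auxPi (A := A) (B := B)) := by
  simp [auxComplex]

lemma auxComplex_exactAt_succ (n : ℕ) :
    (auxComplex A B).ExactAt (n + 1) := by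
  rw [HomologicalComplex.exactAt_iff' _ (n + 1 + 1) (n + 1) n (by simp) (by simp)]
  dsimp [auxComplex, HomologicalComplex.sc', HomologicalComplex.shortComplexFunctor',
      ChainComplex.mk', ChainComplex.mk]
  match n with
  | 0 => apply CategoryTheory.exact_d_f
  | n + 1 =>
    dsimp [ChainComplex.of.d]
    simp only [↓reduceIte]
    apply CategoryTheory.exact_d_f

instance (n : ℕ) : CategoryTheory.Projective ((auxComplex A B).X n) := by
  obtain (_ | _ | _ | n) := n
  · show CategoryTheory.Projective (ModuleCat.of A A); infer_instance
  all_goals apply Projective.projective_over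

variable {A B}

def auxRes (hsurj : Function.Surjective (algebraMap A B)) :
    CategoryTheory.ProjectiveResolution (ModuleCat.of A B) where
  complex := auxComplex A B
  π := (ChainComplex.toSingle₀Equiv _ _).symm ⟨auxPi, by
          rw [auxComplex_d_1_0]
          exact (Category.assoc _ _ _).trans ((whisker_eq _ (kernel.condition _)).trans comp_zero)⟩
  quasiIso := ⟨fun n => by
    haveI : Epi (auxPi (A := A) (B := B)) := (ModuleCat.epi_iff_surjective _).2 (fun b => hsurj b)
    cases n
    · rw [ChainComplex.quasiIsoAt₀_iff, ShortComplex.quasiIso_iff_of_zeros']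
      · refine (ShortComplex.exact_and_epi_g_iff_of_iso ?_).2
          ⟨CategoryTheory.exact_d_f (auxPi (A := A) (B := B)), by dsimp; infer_instance⟩
        exact ShortComplex.isoMk (Iso.refl _) (Iso.refl _) (Iso.refl _)
          (by simp [auxComplex]; rfl) (by simp; rfl)
      all_goals rfl
    · rw [quasiIsoAt_iff_exactAt']
      · apply auxComplex_exactAt_succ
      · apply ChainComplex.exactAt_succ_single_obj⟩

theorem ker_le_sq
    (hsurj : Function.Surjective (algebraMap A B))
    {M1 M2 : Type u} [AddCommGroup M1] [Module A M1] [AddCommGroup M2] [Module A M2]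
    (g : M2 →ₗ[A] M1) (f : M1 →ₗ[A] A)
    (hfg : f.comp g = 0)
    (hker : ∀ p, algebraMap A B (f p) = 0)
    (hrange : ∀ x : A, algebraMap A B x = 0 → ∃ p, f p = x)
    (hexact : ∀ t : B ⊗[A] M1, LinearMap.lTensor B f t = 0 →
      ∃ s : B ⊗[A] M2, LinearMap.lTensor B g s = t) :
    RingHom.ker (algebraMap A B) ≤
      RingHom.ker (algebraMap A B) * RingHom.ker (algebraMap A B) := by
  set I : Ideal A := RingHom.ker (algebraMap A B) with hI
  intro x hx
  have hx0 : algebraMap A B x = 0 := hx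
  obtain ⟨p, hp⟩ := hrange x hx0
  have hcycle : LinearMap.lTensor B f ((1 : B) ⊗ₜ[A] p) = 0 := by
    rw [LinearMap.lTensor_tmul, hp]
    calc (1 : B) ⊗ₜ[A] x = (1 : B) ⊗ₜ[A] (x • (1 : A)) := by rw [smul_eq_mul, mul_one]
    _ = x • ((1 : B) ⊗ₜ[A] (1 : A)) := by rw [tmul_smul]
    _ = (x • (1 : B)) ⊗ₜ[A] (1 : A) := by rw [smul_tmul']
    _ = 0 := by
        rw [Algebra.smul_def, mul_one, hx0, zero_tmul]
  obtain ⟨s, hs⟩ := hexact _ hcycle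
  have hmem : ∀ z, f z ∈ I := fun z => hker z
  let fI : M1 →ₗ[A] I := f.codRestrict (I : Submodule A A) hmem
  let N : Submodule A I := Submodule.comap ((I : Submodule A A).subtype) (I * I)
  let ψ : M1 →ₗ[A] (I ⧸ N) := N.mkQ ∘ₗ fI
  have hψg : ψ ∘ₗ g = 0 := by
    apply LinearMap.ext
    intro z
    have h0 : f (g z) = 0 := LinearMap.congr_fun hfg z
    have h1 : fI (g z) = 0 := Subtype.ext h0
    show N.mkQ (fI (g z)) = 0
    rw [h1, map_zero]
  have key : (1 : B) ⊗ₜ[A] (ψ p) = 0 := by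
    have h1 := congrArg (LinearMap.lTensor B ψ) hs
    rw [← LinearMap.comp_apply, ← LinearMap.lTensor_comp, hψg] at h1
    rw [LinearMap.lTensor_tmul] at h1
    simpa using h1.symm
  have hIker : I ≤ LinearMap.ker (LinearMap.lsmul A (I ⧸ N)) := by
    intro i hi
    rw [LinearMap.mem_ker]
    apply LinearMap.ext
    intro w
    obtain ⟨m, rfl⟩ := N.mkQ_surjective w
    show i • N.mkQ m = 0
    rw [← map_smul, Submodule.mkQ_apply, Submodule.Quotient.mk_eq_zero]
    show ((i • m : I) : A) ∈ I * I
    exact Ideal.mul_mem_mul hi m.2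
  let e : (A ⧸ I) ≃+* B := RingHom.quotientKerEquivOfSurjective hsurj
  have hlin : ∀ (a : A) (b : B), e.symm (a • b) = a • e.symm b := by
    intro a b
    rw [Algebra.smul_def, map_mul]
    have : e.symm (algebraMap A B a) = Ideal.Quotient.mk I a := by
      apply e.injective
      rw [RingEquiv.apply_symm_apply]
      rfl
    rw [this]
    rw [Algebra.smul_def]
    rfl
  let esl : B →ₗ[A] (A ⧸ I) :=
    { toFun := e.symm
      map_add' := map_add _
      map_smul' := hlin }
  let αq : (A ⧸ I) →ₗ[A] Module.End A (I ⧸ N) :=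
    Submodule.liftQ I (LinearMap.lsmul A (I ⧸ N)) hIker
  let r : B ⊗[A] (I ⧸ N) →ₗ[A] (I ⧸ N) := TensorProduct.lift (αq ∘ₗ esl)
  have hr : r ((1 : B) ⊗ₜ[A] (ψ p)) = ψ p := by
    rw [TensorProduct.lift.tmul]
    show αq (e.symm 1) (ψ p) = ψ p
    rw [map_one]
    have h1 : (1 : A ⧸ I) = Submodule.Quotient.mk (1 : A) := rfl
    rw [h1, Submodule.liftQ_apply, LinearMap.lsmul_apply, one_smul]
  have hψ0 : ψ p = 0 := by rw [← hr, key, map_zero]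
  have h2 : fI p ∈ N := by
    rw [← Submodule.Quotient.mk_eq_zero N]
    exact hψ0
  have h3 : f p ∈ I * I := Submodule.mem_comap.mp h2
  rwa [hp] at h3

theorem ker_idem
    (hsurj : Function.Surjective (algebraMap A B))
    (htor1 : IsZero (((Tor (ModuleCat.{u} A) 1).obj (ModuleCat.of A B)).obj (ModuleCat.of A B))) :
    RingHom.ker (algebraMap A B) ≤
      RingHom.ker (algebraMap A B) * RingHom.ker (algebraMap A B) := by
  let P := auxRes (A := A) (B := B) hsurj
  let F := (tensoringLeft (ModuleCat.{u} A)).obj (ModuleCat.of A B)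
  have hz : IsZero ((F.leftDerived 1).obj (ModuleCat.of A B)) := htor1
  have hz2 : IsZero ((((F.mapHomologicalComplex _).obj P.complex)).homology 1) :=
    IsZero.of_iso hz (P.isoLeftDerivedObj F 1).symm
  have hex : ((F.mapHomologicalComplex _).obj P.complex).ExactAt 1 :=
    (HomologicalComplex.exactAt_iff_isZero_homology _ _).2 hz2
  replace hex := (HomologicalComplex.exactAt_iff'
    ((F.mapHomologicalComplex (ComplexShape.down ℕ)).obj P.complex) 2 1 0
    (by simp) (by simp)).1 hex
  replace hex := (ShortComplex.moduleCat_exact_iff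
    ((((F.mapHomologicalComplex (ComplexShape.down ℕ)).obj P.complex)).sc' 2 1 0)).1 hex
  -- concrete data
  have hd0 : (auxComplex A B).d 1 0 ≫ auxPi (A := A) (B := B) = 0 := by
    rw [auxComplex_d_1_0]
    exact (Category.assoc _ _ _).trans ((whisker_eq _ (kernel.condition _)).trans comp_zero)
  have hker : ∀ p, algebraMap A B (((auxComplex A B).d 1 0) p) = 0 := by
    intro p
    exact congrArg (fun g => g.hom p) hd0
  have hrange : ∀ x : A, algebraMap A B x = 0 →
      ∃ p, ((auxComplex A B).d 1 0) p = x := by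
    have hexd := CategoryTheory.exact_d_f (auxPi (A := A) (B := B))
    rw [ShortComplex.moduleCat_exact_iff] at hexd
    intro x hx
    obtain ⟨p, hp⟩ := hexd x (by exact hx)
    exact ⟨p, by rw [auxComplex_d_1_0]; exact hp⟩
  have hfg : ((auxComplex A B).d 1 0).hom.comp ((auxComplex A B).d 2 1).hom = 0 :=
    congrArg ModuleCat.Hom.hom ((auxComplex A B).d_comp_d 2 1 0)
  exact ker_le_sq hsurj ((auxComplex A B).d 2 1).hom ((auxComplex A B).d 1 0).hom hfg hker hrange
    (fun t ht => hex t ht)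

end Aux

/-- A ring homomorphism is an epimorphism in the category of rings. -/
def IsRingEpi {A B : Type*} [Ring A] [Ring B] (f : A →+* B) : Prop :=
  ∀ (C : Type*) [Ring C] (g₁ g₂ : B →+* C), g₁.comp f = g₂.comp f → g₁ = g₂

/-- Let `A` be a finite dimensional algebra over a field `K` and
`f : A → B` a surjective homological ring epimorphism (`Tor_i^A(B,B) = 0` for all `i > 0`).
Then `ker(f)` is an idempotent ideal, hence `ker(f) = AeA` for some idempotent `e ∈ A`;
in particular `B ≅ A/AeA`. -/
theorem ker_of_surjective_homological_is_stratifying {K A B : Type u} [Field K] [CommRing A]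
    [Algebra K A] [FiniteDimensional K A] [CommRing B] [Algebra A B]
    (hsurj : Function.Surjective (algebraMap A B))
    (hepi : IsRingEpi (algebraMap A B))
    (htor : ∀ i : ℕ, 0 < i →
      IsZero (((Tor (ModuleCat.{u} A) i).obj (ModuleCat.of A B)).obj (ModuleCat.of A B))) :
    RingHom.ker (algebraMap A B) * RingHom.ker (algebraMap A B)
        = RingHom.ker (algebraMap A B) ∧
      ∃ e : A, e * e = e ∧ RingHom.ker (algebraMap A B) = Ideal.span {e} ∧
        Nonempty ((A ⧸ Ideal.span ({e} : Set A)) ≃+* B) := by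
  set I : Ideal A := RingHom.ker (algebraMap A B) with hIdef
  have hle : I ≤ I * I := ker_idem hsurj (htor 1 one_pos)
  have hIdem : I * I = I := le_antisymm Ideal.mul_le_left hle
  have hN1 : IsNoetherian K A := IsNoetherian.iff_fg.mpr inferInstance
  have hN2 : IsNoetherian A A := isNoetherian_of_tower K hN1
  have hFG : I.FG := IsNoetherian.noetherian I
  obtain ⟨r, hr1, hr2⟩ :=
    Submodule.exists_sub_one_mem_and_smul_eq_zero_of_fg_of_le_smul I I hFG
      (by rw [smul_eq_mul]; exact hle)
  set e := 1 - r with he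
  have heI : e ∈ I := by
    have := I.neg_mem hr1
    rwa [neg_sub] at this
  have hre : r * e = 0 := by rw [← smul_eq_mul]; exact hr2 e heI
  have hee : e * e = e := by
    conv_lhs => rw [he]
    rw [sub_mul, one_mul, hre, sub_zero]
  have hspan : I = Ideal.span {e} := by
    apply le_antisymm
    · intro x hx
      have hrx : r * x = 0 := by rw [← smul_eq_mul]; exact hr2 x hx
      rw [Ideal.mem_span_singleton]
      exact ⟨x, by rw [he, sub_mul, one_mul, hrx, sub_zero]⟩
    · rw [Ideal.span_le, Set.singleton_subset_iff]
      exact heI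
  refine ⟨hIdem, e, hee, hspan, ⟨?_⟩⟩
  exact (Ideal.quotEquivOfEq hspan.symm).trans (RingHom.quotientKerEquivOfSurjective hsurj)
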